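/- For all real numbers u, v > 0, one has u − (v + u)·log(u/v + 1) ≤ −(u²/2)/(v + u/3). -/

import Mathlib

lemma aux1 (x : ℝ) (hx : 0 ≤ x) :
    3*x*(6+x)/(2*(3+x)^2) ≤ Real.log (1+x) := by
  set g : ℝ → ℝ := fun y => Real.log (1+y) - 3*y*(6+y)/(2*(3+y)^2) with hg
  have hd : ∀ y ∈ Set.Ici (0:ℝ), HasDerivAt g
      (1/(1+y) - ((3*1*(6+y) + 3*y*1)*(2*(3+y)^2)
        - 3*y*(6+y)*(2*((2:ℕ)*(3+y)^1*1)))/(2*(3+y)^2)^2) y := by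
    intro y hy
    have hy0 : (0:ℝ) ≤ y := hy
    have h1 : HasDerivAt (fun y : ℝ => Real.log (1+y)) (1/(1+y)) y := by
      have := (HasDerivAt.const_add 1 (hasDerivAt_id y)).log (by positivity)
      simpa using this
    have hn : HasDerivAt (fun y : ℝ => 3*y*(6+y)) (3*1*(6+y) + 3*y*1) y :=
      ((hasDerivAt_id y).const_mul 3).mul ((hasDerivAt_id y).const_add 6)
    have hden : HasDerivAt (fun y : ℝ => 2*(3+y)^2) (2*((2:ℕ)*(3+y)^1*1)) y :=
      (((hasDerivAt_id y).const_add 3).pow 2).const_mul 2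
    exact h1.sub (hn.div hden (by positivity))
  have hmono : MonotoneOn g (Set.Ici 0) := by
    apply monotoneOn_of_deriv_nonneg (convex_Ici 0)
    · exact fun y hy => ((hd y hy).continuousAt).continuousWithinAt
    · intro y hy
      rw [interior_Ici] at hy
      exact ((hd y (Set.mem_Ici.mpr (le_of_lt hy))).differentiableAt).differentiableWithinAt
    · intro y hy
      rw [interior_Ici] at hy
      have hy0 : (0:ℝ) < y := hy
      rw [(hd y (Set.mem_Ici.mpr (le_of_lt hy))).deriv]
      have h2 : ((3*1*(6+y) + 3*y*1)*(2*(3+y)^2)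
          - 3*y*(6+y)*(2*((2:ℕ)*(3+y)^1*1)))/(2*(3+y)^2)^2 ≤ 1/(1+y) := by
        rw [div_le_div_iff₀ (by positivity) (by positivity)]
        push_cast
        nlinarith [mul_nonneg (mul_nonneg (by linarith : (0:ℝ) ≤ 3+y)
          (sq_nonneg y)) (by linarith : (0:ℝ) ≤ 9+y)]
      linarith
  have h0 : g 0 = 0 := by simp [hg]
  have := hmono (Set.self_mem_Ici) hx hx
  rw [h0] at this
  simpa [hg, sub_nonneg] using this

lemma aux2 (x : ℝ) (hx : 0 ≤ x) :
    3*x^2/(2*(3+x)) ≤ (1+x) * Real.log (1+x) - x := by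
  set f : ℝ → ℝ := fun y => (1+y) * Real.log (1+y) - y - 3*y^2/(2*(3+y)) with hf
  have hd : ∀ y ∈ Set.Ici (0:ℝ), HasDerivAt f
      ((1 * Real.log (1+y) + (1+y) * (1/(1+y))) - 1 -
        (3*((2:ℕ)*y^1*1)*(2*(3+y)) - 3*y^2*(2*1))/(2*(3+y))^2) y := by
    intro y hy
    have hy0 : (0:ℝ) ≤ y := hy
    have h1 : HasDerivAt (fun y : ℝ => Real.log (1+y)) (1/(1+y)) y := by
      have := (HasDerivAt.const_add 1 (hasDerivAt_id y)).log (by positivity)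
      simpa using this
    have hm : HasDerivAt (fun y : ℝ => (1+y) * Real.log (1+y))
        (1 * Real.log (1+y) + (1+y) * (1/(1+y))) y :=
      ((hasDerivAt_id y).const_add 1).mul h1
    have hn : HasDerivAt (fun y : ℝ => 3*y^2) (3*((2:ℕ)*y^1*1)) y :=
      ((hasDerivAt_id y).pow 2).const_mul 3
    have hden : HasDerivAt (fun y : ℝ => 2*(3+y)) (2*1) y :=
      ((hasDerivAt_id y).const_add 3).const_mul 2
    exact (hm.sub (hasDerivAt_id y)).sub (hn.div hden (by positivity))
  have hmono : MonotoneOn f (Set.Ici 0) := by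
    apply monotoneOn_of_deriv_nonneg (convex_Ici 0)
    · exact fun y hy => ((hd y hy).continuousAt).continuousWithinAt
    · intro y hy
      rw [interior_Ici] at hy
      exact ((hd y (Set.mem_Ici.mpr (le_of_lt hy))).differentiableAt).differentiableWithinAt
    · intro y hy
      rw [interior_Ici] at hy
      have hy0 : (0:ℝ) < y := hy
      rw [(hd y (Set.mem_Ici.mpr (le_of_lt hy))).deriv]
      have h1 : (1+y) * (1/(1+y)) = 1 := by field_simp
      have h2 := aux1 y hy0.le
      have h3 : (3*((2:ℕ)*y^1*1)*(2*(3+y)) - 3*y^2*(2*1))/(2*(3+y))^2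
          ≤ 3*y*(6+y)/(2*(3+y)^2) := by
        rw [div_le_div_iff₀ (by positivity) (by positivity)]
        ring_nf
        nlinarith [sq_nonneg y]
      linarith
  have h0 : f 0 = 0 := by simp [hf]
  have := hmono (Set.self_mem_Ici) hx hx
  rw [h0] at this
  simpa [hf, sub_nonneg] using this

theorem stmt_0 (u v : ℝ) (hu : 0 < u) (hv : 0 < v) :
    u - (v + u) * Real.log (u / v + 1) ≤ -(u ^ 2 / 2) / (v + u / 3) := by
  have h := aux2 (u/v) (by positivity)
  have hx : (0:ℝ) < u/v := by positivity
  have e1 : (1 + u/v) * Real.log (1 + u/v) - u/v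
      = ((v+u) * Real.log (u/v + 1) - u) / v := by
    rw [add_comm (u/v) 1]
    field_simp
    try ring
  have e2 : 3*(u/v)^2/(2*(3+u/v)) = (u^2/2) / (v + u/3) / v := by
    field_simp
    try ring
  rw [e1, e2] at h
  have h3 := (div_le_div_iff_of_pos_right hv).mp h
  have e3 : -(u ^ 2 / 2) / (v + u / 3) = -(u^2/2 / (v+u/3)) := by
    rw [neg_div]
  linarith
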